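/- Let n₁, n₂ ∈ ℝ³ be nonzero vectors with n₁ ≠ ±n₂, and let u₁, u₂ ∈ ℂ³ \ {0} satisfy u₁ · n₁ = 0 and u₂ · n₂ = 0. Then P_{n₁+n₂}[(u₁ · n₂)u₂ + (u₂ · n₁)u₁] = 0 holds if and only if one of the following holds: (i) n₁ and n₂ are linearly dependent; (ii) n₁, n₂ are linearly independent and the real and imaginary parts of u₁ and u₂ are all perpendicular to the plane spanned by n₁ and n₂; (iii) neither (i) nor (ii) holds, |n₁| = |n₂|, and u₂ = γ R_{n̂₁↦n̂₂} u₁ for some nonzero γ ∈ ℂ, where n̂ⱼ = nⱼ/|nⱼ|. -/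

import Mathlib

open scoped Classical

noncomputable section

abbrev V3 := Fin 3 → ℝ
abbrev C3 := Fin 3 → ℂ

/-- Canonical inclusion of real vectors into `ℂ³`. -/
def toC (v : V3) : C3 := fun i => (v i : ℂ)

/-- Real dot product. -/
def dotR (u v : V3) : ℝ := ∑ i, u i * v i

/-- ℂ-bilinear dot product on `ℂ³`. -/
def dotC (u v : C3) : ℂ := ∑ i, u i * v i

/-- Euclidean norm of a vector of `ℝ³`. -/
def norm3 (v : V3) : ℝ := Real.sqrt (dotR v v)

/-- Cross product on `ℝ³`. -/
def crossR (u v : V3) : V3 :=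
  ![u 1 * v 2 - u 2 * v 1, u 2 * v 0 - u 0 * v 2, u 0 * v 1 - u 1 * v 0]

/-- ℂ-bilinear cross product on `ℂ³`. -/
def crossC (u v : C3) : C3 :=
  ![u 1 * v 2 - u 2 * v 1, u 2 * v 0 - u 0 * v 2, u 0 * v 1 - u 1 * v 0]

/-- Orthogonal projection of `ℂ³` onto `{v : m · v = 0}` (for a real frequency `m`). -/
def projC (m : V3) (v : C3) : C3 :=
  v - (dotC (toC m) v / ((dotR m m : ℝ) : ℂ)) • toC m

/-- Rodrigues rotation formula (unit axis `a`, cosine `c`, sine `s`). -/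
def rodriguesR (a : V3) (c s : ℝ) (v : V3) : V3 :=
  c • v + s • crossR a v + ((1 - c) * dotR a v) • a

/-- Complexified Rodrigues rotation formula; since the coefficients are real this acts on the
real and imaginary parts separately. -/
def rodriguesC (a : C3) (c s : ℂ) (v : C3) : C3 :=
  c • v + s • crossC a v + ((1 - c) * dotC a v) • a

/-- The rotation `R_{ω₁ ↦ ω₂}` around the axis `ω₁ × ω₂` by the angle `θ ∈ (0,π)` with
`cos θ = ω₁ · ω₂` (for unit vectors `ω₁ ≠ ±ω₂`, so that `sin θ = |ω₁ × ω₂|`). -/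
def geoRot (ω₁ ω₂ : V3) (v : V3) : V3 :=
  rodriguesR ((norm3 (crossR ω₁ ω₂))⁻¹ • crossR ω₁ ω₂) (dotR ω₁ ω₂) (norm3 (crossR ω₁ ω₂)) v

/-- The rotation `R_{ω₁ ↦ ω₂}` extended complex-linearly to `ℂ³`. -/
def geoRotC (ω₁ ω₂ : V3) (v : C3) : C3 :=
  rodriguesC (toC ((norm3 (crossR ω₁ ω₂))⁻¹ • crossR ω₁ ω₂)) ((dotR ω₁ ω₂ : ℝ) : ℂ)
    ((norm3 (crossR ω₁ ω₂) : ℝ) : ℂ) v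

/-- Rotation around the unit axis `a` by the angle `α`, extended complex-linearly to `ℂ³`. -/
def axisRotC (a : V3) (α : ℝ) (v : C3) : C3 :=
  rodriguesC (toC a) ((Real.cos α : ℝ) : ℂ) ((Real.sin α : ℝ) : ℂ) v

/-- `e∥(n) = e⊥ × (n/|n|)`. -/
def ePar (ePerp : V3) (n : V3) : V3 := crossR ePerp ((norm3 n)⁻¹ • n)

/-- Partial derivative of a real-valued function on `ℝ³`. -/
def pderivR (f : V3 → ℝ) (i : Fin 3) (x : V3) : ℝ := fderiv ℝ f x (Pi.single i 1)

/-- Partial derivative of a complex-valued function on `ℝ³`. -/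
def pderivC (f : V3 → ℂ) (i : Fin 3) (x : V3) : ℂ := fderiv ℝ f x (Pi.single i 1)

/-- Curl of a real vector field on `ℝ³`. -/
def curlR (u : V3 → V3) (x : V3) : V3 :=
  ![pderivR (fun y => u y 2) 1 x - pderivR (fun y => u y 1) 2 x,
    pderivR (fun y => u y 0) 2 x - pderivR (fun y => u y 2) 0 x,
    pderivR (fun y => u y 1) 0 x - pderivR (fun y => u y 0) 1 x]

/-- Curl of a complex vector field on `ℝ³`. -/
def curlC (u : V3 → C3) (x : V3) : C3 :=
  ![pderivC (fun y => u y 2) 1 x - pderivC (fun y => u y 1) 2 x,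
    pderivC (fun y => u y 0) 2 x - pderivC (fun y => u y 2) 0 x,
    pderivC (fun y => u y 1) 0 x - pderivC (fun y => u y 0) 1 x]

/-- Real and imaginary parts of a complex vector, as real vectors. -/
def reV (u : C3) : V3 := fun i => (u i).re
def imV (u : C3) : V3 := fun i => (u i).im

/-- `u` is perpendicular (in real and imaginary parts) to the plane spanned by `n₁, n₂`. -/
def PerpToPlane (n₁ n₂ : V3) (u : C3) : Prop :=
  dotR (reV u) n₁ = 0 ∧ dotR (reV u) n₂ = 0 ∧ dotR (imV u) n₁ = 0 ∧ dotR (imV u) n₂ = 0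

-- helper lemmas
lemma dotC_expand (u v : C3) : dotC u v = u 0 * v 0 + u 1 * v 1 + u 2 * v 2 := by
  simp [dotC, Fin.sum_univ_three]

lemma dotR_expand (u v : V3) : dotR u v = u 0 * v 0 + u 1 * v 1 + u 2 * v 2 := by
  simp [dotR, Fin.sum_univ_three]

lemma dotC_comm (u v : C3) : dotC u v = dotC v u := by
  simp [dotC_expand]; ring

lemma toC_apply (v : V3) (i : Fin 3) : toC v i = (v i : ℂ) := rfl

lemma dotC_toC_toC (x y : V3) : dotC (toC x) (toC y) = ((dotR x y : ℝ) : ℂ) := by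
  simp [dotC_expand, dotR_expand, toC]

lemma toC_add (x y : V3) : toC (x + y) = toC x + toC y := by
  funext i; simp [toC]

lemma toC_smul (r : ℝ) (x : V3) : toC (r • x) = (r : ℂ) • toC x := by
  funext i; simp [toC]

lemma toC_cross (x y : V3) : toC (crossR x y) = crossC (toC x) (toC y) := by
  funext i; fin_cases i <;> simp [toC, crossR, crossC]

lemma crossC_smul_left (c : ℂ) (x y : C3) : crossC (c • x) y = c • crossC x y := by
  funext i; fin_cases i <;> simp [crossC] <;> ring

lemma dotC_add_right (u v w : C3) : dotC u (v + w) = dotC u v + dotC u w := by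
  simp [dotC_expand]; ring

lemma dotC_smul_right (c : ℂ) (u v : C3) : dotC u (c • v) = c * dotC u v := by
  simp [dotC_expand]; ring

lemma dotC_add_left (u v w : C3) : dotC (u + v) w = dotC u w + dotC v w := by
  simp [dotC_expand]; ring

lemma dotC_smul_left (c : ℂ) (u v : C3) : dotC (c • u) v = c * dotC u v := by
  simp [dotC_expand]; ring

-- triple product
lemma crossC_cross (x y v : C3) :
    crossC (crossC x y) v = dotC x v • y - dotC y v • x := by
  funext i; fin_cases i <;> simp [crossC, dotC_expand] <;> ring

lemma crossR_cross (x y v : V3) :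
    crossR (crossR x y) v = dotR x v • y - dotR y v • x := by
  funext i; fin_cases i <;> simp [crossR, dotR_expand] <;> ring

-- decomposition identity
lemma decomp (x y v : C3) :
    (dotC x x * dotC y y - dotC x y ^ 2) • v =
      (dotC y y * dotC x v - dotC x y * dotC y v) • x
      + (dotC x x * dotC y v - dotC x y * dotC x v) • y
      + dotC (crossC x y) v • crossC x y := by
  funext i; fin_cases i <;> simp [crossC, dotC_expand] <;> ring

lemma lagrange (x y : V3) :
    dotR (crossR x y) (crossR x y) = dotR x x * dotR y y - dotR x y ^ 2 := by
  simp [crossR, dotR_expand]; ring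

lemma cross_dot_left (x y : V3) : dotR (crossR x y) x = 0 := by
  simp [crossR, dotR_expand]; ring

lemma cross_dot_right (x y : V3) : dotR (crossR x y) y = 0 := by
  simp [crossR, dotR_expand]; ring

lemma dotR_self_pos {v : V3} (hv : v ≠ 0) : 0 < dotR v v := by
  have h1 : ∀ i : Fin 3, 0 ≤ v i * v i := fun i => mul_self_nonneg _
  have h2 : ∃ i : Fin 3, v i ≠ 0 := by
    by_contra h; push_neg at h; exact hv (funext h)
  obtain ⟨i, hi⟩ := h2
  exact Finset.sum_pos' (fun j _ => h1 j) ⟨i, Finset.mem_univ i, mul_self_pos.2 hi⟩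

lemma norm3_pos {v : V3} (hv : v ≠ 0) : 0 < norm3 v :=
  Real.sqrt_pos.2 (dotR_self_pos hv)

lemma norm3_sq {v : V3} : norm3 v ^ 2 = dotR v v := by
  rw [norm3, Real.sq_sqrt]
  · exact dotR_self_nonneg v
  where dotR_self_nonneg (v : V3) : 0 ≤ dotR v v :=
    Finset.sum_nonneg fun i _ => mul_self_nonneg _

lemma indep_cross_ne {x y : V3} (hx : x ≠ 0) (h : LinearIndependent ℝ ![x, y]) :
    crossR x y ≠ 0 := by
  intro hc
  have key := crossR_cross x y x
  rw [hc] at key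
  have h0 : crossR 0 x = 0 := by funext i; fin_cases i <;> simp [crossR]
  rw [h0, eq_comm, sub_eq_zero] at key
  have hrel : dotR y x • x + (-(dotR x x)) • y = 0 := by
    rw [neg_smul, ← key]; abel
  have hres := (LinearIndependent.pair_iff.1 h) (dotR y x) (-(dotR x x)) hrel
  exact absurd (neg_eq_zero.1 hres.2) (ne_of_gt (dotR_self_pos hx))



lemma dotC_toC_re (u : C3) (n : V3) : (dotC u (toC n)).re = dotR (reV u) n := by
  simp [dotC_expand, dotR_expand, toC, reV]

lemma dotC_toC_im (u : C3) (n : V3) : (dotC u (toC n)).im = dotR (imV u) n := by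
  simp [dotC_expand, dotR_expand, toC, imV]

lemma dotC_toC_eq_zero_iff (u : C3) (n : V3) :
    dotC u (toC n) = 0 ↔ dotR (reV u) n = 0 ∧ dotR (imV u) n = 0 := by
  rw [Complex.ext_iff, dotC_toC_re, dotC_toC_im]; simp

lemma dotR_comm (u v : V3) : dotR u v = dotR v u := by simp [dotR_expand]; ring

lemma dotR_smul_left (r : ℝ) (u v : V3) : dotR (r • u) v = r * dotR u v := by
  simp [dotR_expand]; ring

lemma dotR_smul_right (r : ℝ) (u v : V3) : dotR u (r • v) = r * dotR u v := by
  simp [dotR_expand]; ring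

lemma crossR_smul_left (r : ℝ) (u v : V3) : crossR (r • u) v = r • crossR u v := by
  funext i; fin_cases i <;> simp [crossR] <;> ring

lemma crossR_smul_right (r : ℝ) (u v : V3) : crossR u (r • v) = r • crossR u v := by
  funext i; fin_cases i <;> simp [crossR] <;> ring

lemma norm3_smul (r : ℝ) (v : V3) : norm3 (r • v) = |r| * norm3 v := by
  rw [norm3, norm3, dotR_smul_left, dotR_smul_right, ← mul_assoc, ← sq,
    Real.sqrt_mul (sq_nonneg r), Real.sqrt_sq_eq_abs]

-- geoRotC explicit formula in terms of unnormalized data, assuming equal norms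
lemma geoRotC_formula (n₁ n₂ : V3) (hn₁ : n₁ ≠ 0)
    (hN : dotR n₁ n₁ = dotR n₂ n₂) (hp : crossR n₁ n₂ ≠ 0) (u : C3) :
    geoRotC ((norm3 n₁)⁻¹ • n₁) ((norm3 n₂)⁻¹ • n₂) u =
      ((dotR n₁ n₂ / dotR n₁ n₁ : ℝ) : ℂ) • u
      + (((dotR n₁ n₁)⁻¹ : ℝ) : ℂ) • crossC (toC (crossR n₁ n₂)) u
      + ((((dotR n₁ n₁ - dotR n₁ n₂) / (dotR n₁ n₁ * dotR (crossR n₁ n₂) (crossR n₁ n₂)) : ℝ) : ℂ)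
          * dotC (toC (crossR n₁ n₂)) u) • toC (crossR n₁ n₂) := by
  set N := norm3 n₁ with hNdef
  have hNpos : 0 < N := norm3_pos hn₁
  have hN2 : norm3 n₂ = N := by rw [hNdef, norm3, norm3, hN]
  have hNsq : N ^ 2 = dotR n₁ n₁ := norm3_sq
  have hppos : 0 < norm3 (crossR n₁ n₂) := norm3_pos hp
  have hPsq : norm3 (crossR n₁ n₂) ^ 2 = dotR (crossR n₁ n₂) (crossR n₁ n₂) := norm3_sq
  have hcr : crossR (N⁻¹ • n₁) (N⁻¹ • n₂) = (N⁻¹ * N⁻¹) • crossR n₁ n₂ := by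
    rw [crossR_smul_left, crossR_smul_right, smul_smul]
  have hdr : dotR (N⁻¹ • n₁) (N⁻¹ • n₂) = N⁻¹ * N⁻¹ * dotR n₁ n₂ := by
    rw [dotR_smul_left, dotR_smul_right]; ring
  have hs : norm3 ((N⁻¹ * N⁻¹) • crossR n₁ n₂) = N⁻¹ * N⁻¹ * norm3 (crossR n₁ n₂) := by
    rw [norm3_smul, abs_of_pos (by positivity)]
  rw [geoRotC, hN2, rodriguesC, hcr, hs, hdr]
  rw [smul_smul, toC_smul, crossC_smul_left, dotC_smul_left]
  set q := toC (crossR n₁ n₂)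
  set Q := norm3 (crossR n₁ n₂)
  have hNsqC : ((N : ℂ))^2 = ((dotR n₁ n₁ : ℝ) : ℂ) := by exact_mod_cast hNsq
  have hPsqC : ((Q : ℂ))^2 = ((dotR (crossR n₁ n₂) (crossR n₁ n₂) : ℝ) : ℂ) := by
    exact_mod_cast hPsq
  have hN0 : (N : ℂ) ≠ 0 := by exact_mod_cast ne_of_gt hNpos
  have hQ0 : (Q : ℂ) ≠ 0 := by exact_mod_cast ne_of_gt hppos
  match_scalars <;>
    (push_cast; rw [← hNsqC]; try rw [← hPsqC])
  · field_simp
  · field_simp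
  · field_simp


lemma not_indep_exists {x y : V3} (hx : x ≠ 0) (hy : y ≠ 0)
    (h : ¬ LinearIndependent ℝ ![x, y]) : ∃ r : ℝ, r ≠ 0 ∧ y = r • x := by
  rw [LinearIndependent.pair_iff] at h
  push_neg at h
  obtain ⟨s, t, hst, hne⟩ := h
  have hs : s ≠ 0 := by
    intro hs0
    rw [hs0, zero_smul, zero_add] at hst
    rcases smul_eq_zero.1 hst with h' | h'
    · exact hne hs0 h'
    · exact hy h'
  have ht : t ≠ 0 := by
    intro ht0
    rw [ht0, zero_smul, add_zero] at hst
    rcases smul_eq_zero.1 hst with h' | h'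
    · exact hs h'
    · exact hx h'
  refine ⟨-s / t, by simp [hs, ht], ?_⟩
  have : t • y = (-s) • x := by
    rw [neg_smul, eq_neg_iff_add_eq_zero, add_comm]; exact hst
  calc y = t⁻¹ • t • y := by rw [smul_smul, inv_mul_cancel₀ ht, one_smul]
    _ = t⁻¹ • (-s) • x := by rw [this]
    _ = (-s / t) • x := by rw [smul_smul]; congr 1; field_simp

lemma dotC_sub_left (u v w : C3) : dotC (u - v) w = dotC u w - dotC v w := by
  simp [dotC_expand]; ring

lemma keyRot (n₁ n₂ : V3) (u₁ : C3) (hn₁ : n₁ ≠ 0)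
    (hNr : dotR n₁ n₁ = dotR n₂ n₂) (hp : crossR n₁ n₂ ≠ 0)
    (ho₁ : dotC u₁ (toC n₁) = 0) :
    geoRotC ((norm3 n₁)⁻¹ • n₁) ((norm3 n₂)⁻¹ • n₂) u₁ =
      u₁ - (dotC u₁ (toC n₂) * ((dotR n₁ n₁ - dotR n₁ n₂ : ℝ) : ℂ) /
        ((dotR n₁ n₁ ^ 2 - dotR n₁ n₂ ^ 2 : ℝ) : ℂ)) • (toC n₁ + toC n₂) := by
  have hN2pos : 0 < dotR n₁ n₁ := dotR_self_pos hn₁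
  have hPpos : 0 < dotR (crossR n₁ n₂) (crossR n₁ n₂) := dotR_self_pos hp
  have hPr : dotR (crossR n₁ n₂) (crossR n₁ n₂) = dotR n₁ n₁ ^ 2 - dotR n₁ n₂ ^ 2 := by
    rw [lagrange, ← hNr]; ring
  have hPC : ((dotR (crossR n₁ n₂) (crossR n₁ n₂) : ℝ) : ℂ)
      = ((dotR n₁ n₁ ^ 2 - dotR n₁ n₂ ^ 2 : ℝ) : ℂ) := by exact_mod_cast hPr
  have hP0 : ((dotR n₁ n₁ ^ 2 - dotR n₁ n₂ ^ 2 : ℝ) : ℂ) ≠ 0 := by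
    rw [← hPC]; exact_mod_cast ne_of_gt hPpos
  have hN20 : ((dotR n₁ n₁ : ℝ) : ℂ) ≠ 0 := by exact_mod_cast ne_of_gt hN2pos
  have hcross : crossC (toC (crossR n₁ n₂)) u₁ = (-(dotC u₁ (toC n₂))) • toC n₁ := by
    rw [toC_cross, crossC_cross, dotC_comm (toC n₁) u₁, ho₁, dotC_comm (toC n₂) u₁,
      zero_smul, zero_sub, neg_smul]
  have hDq : dotC (toC (crossR n₁ n₂)) u₁ • toC (crossR n₁ n₂) =
      ((dotR n₁ n₁ ^ 2 - dotR n₁ n₂ ^ 2 : ℝ) : ℂ) • u₁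
      + ((dotR n₁ n₂ : ℝ) * dotC u₁ (toC n₂)) • toC n₁
      - ((dotR n₁ n₁ : ℝ) * dotC u₁ (toC n₂)) • toC n₂ := by
    have hdec := decomp (toC n₁) (toC n₂) u₁
    simp only [dotC_toC_toC, ← toC_cross] at hdec
    rw [dotC_comm (toC n₁) u₁, ho₁, dotC_comm (toC n₂) u₁,
      show ((dotR n₂ n₂ : ℝ) : ℂ) = ((dotR n₁ n₁ : ℝ) : ℂ) by exact_mod_cast hNr.symm] at hdec
    funext i
    have hi := congrFun hdec i
    simp only [Pi.add_apply, Pi.sub_apply, Pi.smul_apply, smul_eq_mul] at hi ⊢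
    push_cast
    push_cast at hi
    linear_combination -hi
  have hP0' : ((dotR n₁ n₁ : ℝ) : ℂ) ^ 2 - ((dotR n₁ n₂ : ℝ) : ℂ) ^ 2 ≠ 0 := by
    have := hP0; push_cast at this; convert this using 2
  rw [geoRotC_formula n₁ n₂ hn₁ hNr hp, hcross, mul_smul, hDq]
  match_scalars <;> (push_cast [hPr]; field_simp; try ring)

/-- **Statement 2.** Complete characterization of two non-interacting Fourier modes. -/theorem two_mode_no_interaction_characterization
    (n₁ n₂ : V3) (u₁ u₂ : C3)
    (hn₁ : n₁ ≠ 0) (hn₂ : n₂ ≠ 0) (hne : n₁ ≠ n₂) (hne' : n₁ ≠ -n₂)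
    (hsum : n₁ + n₂ ≠ 0)
    (hu₁ : u₁ ≠ 0) (hu₂ : u₂ ≠ 0)
    (ho₁ : dotC u₁ (toC n₁) = 0) (ho₂ : dotC u₂ (toC n₂) = 0) :
    projC (n₁ + n₂) (dotC u₁ (toC n₂) • u₂ + dotC u₂ (toC n₁) • u₁) = 0 ↔
      (¬ LinearIndependent ℝ ![n₁, n₂]) ∨
      (LinearIndependent ℝ ![n₁, n₂] ∧ PerpToPlane n₁ n₂ u₁ ∧ PerpToPlane n₁ n₂ u₂) ∨
      (LinearIndependent ℝ ![n₁, n₂] ∧ ¬ (PerpToPlane n₁ n₂ u₁ ∧ PerpToPlane n₁ n₂ u₂) ∧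
        norm3 n₁ = norm3 n₂ ∧
        ∃ γ : ℂ, γ ≠ 0 ∧ u₂ = γ • geoRotC ((norm3 n₁)⁻¹ • n₁) ((norm3 n₂)⁻¹ • n₂) u₁) := by
  set a := dotC u₁ (toC n₂) with ha
  set b := dotC u₂ (toC n₁) with hb
  set M := dotR (n₁ + n₂) (n₁ + n₂) with hMdef
  have hMpos : 0 < M := dotR_self_pos hsum
  have hM0 : ((M : ℝ) : ℂ) ≠ 0 := by exact_mod_cast ne_of_gt hMpos
  have hmu₁ : dotC (toC (n₁ + n₂)) u₁ = a := by
    rw [toC_add, dotC_add_left, dotC_comm (toC n₁) u₁, dotC_comm (toC n₂) u₁, ho₁, ← ha,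
      zero_add]
  have hmu₂ : dotC (toC (n₁ + n₂)) u₂ = b := by
    rw [toC_add, dotC_add_left, dotC_comm (toC n₁) u₂, dotC_comm (toC n₂) u₂, ho₂, ← hb,
      add_zero]
  have hdotT : dotC (toC (n₁ + n₂)) (a • u₂ + b • u₁) = 2 * a * b := by
    rw [dotC_add_right, dotC_smul_right, dotC_smul_right, hmu₁, hmu₂]; ring
  have hiff : projC (n₁ + n₂) (a • u₂ + b • u₁) = 0 ↔
      a • u₂ + b • u₁ = (2 * a * b / ((M : ℝ) : ℂ)) • toC (n₁ + n₂) := by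
    rw [projC, sub_eq_zero, hdotT, ← hMdef]
  rw [hiff]
  constructor
  · intro h
    by_cases hLI : LinearIndependent ℝ ![n₁, n₂]
    case neg => exact Or.inl hLI
    have hp : crossR n₁ n₂ ≠ 0 := indep_cross_ne hn₁ hLI
    by_cases hA : a = 0
    · have hb0 : b = 0 := by
        rw [hA, zero_smul, zero_add, mul_zero, zero_mul, zero_div, zero_smul] at h
        rcases smul_eq_zero.1 h with h' | h'
        · exact h'
        · exact absurd h' hu₁
      refine Or.inr (Or.inl ⟨hLI, ?_, ?_⟩)
      · obtain ⟨h1, h2⟩ := (dotC_toC_eq_zero_iff u₁ n₁).1 ho₁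
        obtain ⟨h3, h4⟩ := (dotC_toC_eq_zero_iff u₁ n₂).1 (ha ▸ hA)
        exact ⟨h1, h3, h2, h4⟩
      · obtain ⟨h1, h2⟩ := (dotC_toC_eq_zero_iff u₂ n₂).1 ho₂
        obtain ⟨h3, h4⟩ := (dotC_toC_eq_zero_iff u₂ n₁).1 (hb ▸ hb0)
        exact ⟨h3, h1, h4, h2⟩
    by_cases hB : b = 0
    · exfalso
      apply hA
      rw [hB, zero_smul, add_zero, mul_zero, zero_div, zero_smul] at h
      rcases smul_eq_zero.1 h with h' | h'
      · exact h'
      · exact absurd h' hu₂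
    -- main case: a ≠ 0, b ≠ 0
    have hn2T : dotC (toC n₂) (a • u₂ + b • u₁) = b * a := by
      rw [dotC_add_right, dotC_smul_right, dotC_smul_right, dotC_comm (toC n₂) u₂, ho₂,
        dotC_comm (toC n₂) u₁]
      simp only [← ha]
      ring
    have hkey := congrArg (dotC (toC n₂)) h
    rw [hn2T, dotC_smul_right, dotC_toC_toC] at hkey
    have hMeq : ((M : ℝ) : ℂ) = 2 * ((dotR n₂ (n₁ + n₂) : ℝ) : ℂ) := by
      have h2 : (b * a) * ((M : ℝ) : ℂ) = (b * a) * (2 * ((dotR n₂ (n₁ + n₂) : ℝ) : ℂ)) := by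
        field_simp at hkey
        linear_combination (b * a) * hkey
      exact mul_left_cancel₀ (mul_ne_zero hB hA) h2
    have e1 : M = dotR n₁ n₁ + 2 * dotR n₁ n₂ + dotR n₂ n₂ := by
      rw [hMdef]; simp only [dotR_expand, Pi.add_apply]; ring
    have hNr : dotR n₁ n₁ = dotR n₂ n₂ := by
      have hMR : M = 2 * dotR n₂ (n₁ + n₂) := by exact_mod_cast hMeq
      have e2 : dotR n₂ (n₁ + n₂) = dotR n₁ n₂ + dotR n₂ n₂ := by
        simp only [dotR_expand, Pi.add_apply]; ring
      rw [e1, e2] at hMR; linarith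
    have hnorm3 : norm3 n₁ = norm3 n₂ := by rw [norm3, norm3, hNr]
    have hMr2 : M = 2 * dotR n₁ n₁ + 2 * dotR n₁ n₂ := by rw [e1]; linarith
    have hMc : ((M : ℝ) : ℂ) = 2 * ((dotR n₁ n₁ : ℝ) : ℂ) + 2 * ((dotR n₁ n₂ : ℝ) : ℂ) := by
      exact_mod_cast hMr2
    have hM0' : 2 * ((dotR n₁ n₁ : ℝ) : ℂ) + 2 * ((dotR n₁ n₂ : ℝ) : ℂ) ≠ 0 := hMc ▸ hM0
    have hPr : dotR (crossR n₁ n₂) (crossR n₁ n₂) = dotR n₁ n₁ ^ 2 - dotR n₁ n₂ ^ 2 := by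
      rw [lagrange, ← hNr]; ring
    have hPpos : 0 < dotR (crossR n₁ n₂) (crossR n₁ n₂) := dotR_self_pos hp
    have hP0' : ((dotR n₁ n₁ : ℝ) : ℂ) ^ 2 - ((dotR n₁ n₂ : ℝ) : ℂ) ^ 2 ≠ 0 := by
      have h0 : ((dotR n₁ n₁ ^ 2 - dotR n₁ n₂ ^ 2 : ℝ) : ℂ) ≠ 0 := by
        exact_mod_cast ne_of_gt (hPr ▸ hPpos)
      push_cast at h0; convert h0 using 2
    have hM0'' : ((dotR n₁ n₁ : ℝ) : ℂ) + ((dotR n₁ n₂ : ℝ) : ℂ) ≠ 0 :=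
      fun h0 => hM0' (by linear_combination 2 * h0)
    refine Or.inr (Or.inr ⟨hLI, ?_, hnorm3, -(b / a), neg_ne_zero.2 (div_ne_zero hB hA), ?_⟩)
    · rintro ⟨hP₁, _⟩
      exact hA (ha ▸ (dotC_toC_eq_zero_iff u₁ n₂).2 ⟨hP₁.2.1, hP₁.2.2.2⟩)
    · rw [keyRot n₁ n₂ u₁ hn₁ hNr hp ho₁]
      simp only [← ha]
      apply smul_right_injective C3 hA
      beta_reduce
      rw [toC_add, smul_add] at h
      have h' : a • u₂ = (2 * a * b / ((M : ℝ) : ℂ)) • toC n₁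
          + (2 * a * b / ((M : ℝ) : ℂ)) • toC n₂ - b • u₁ := by
        rw [← h]; abel
      rw [h', hMc]
      match_scalars <;> (push_cast; field_simp; try ring)
  · rintro (hdep | ⟨hLI, hP₁, hP₂⟩ | ⟨hLI, hnP, hnorm, γ, hγ, hu₂eq⟩)
    · obtain ⟨r, hr, hrn⟩ := not_indep_exists hn₁ hn₂ hdep
      have ha0 : a = 0 := by
        rw [ha, hrn, toC_smul, dotC_smul_right, ho₁, mul_zero]
      have hb0 : b = 0 := by
        have hn₁r : n₁ = r⁻¹ • n₂ := by rw [hrn, smul_smul, inv_mul_cancel₀ hr, one_smul]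
        rw [hb, hn₁r, toC_smul, dotC_smul_right, ho₂, mul_zero]
      rw [ha0, hb0]
      simp
    · have ha0 : a = 0 := (dotC_toC_eq_zero_iff u₁ n₂).2 ⟨hP₁.2.1, hP₁.2.2.2⟩
      have hb0 : b = 0 := (dotC_toC_eq_zero_iff u₂ n₁).2 ⟨hP₂.1, hP₂.2.2.1⟩
      rw [ha0, hb0]
      simp
    · have hNr : dotR n₁ n₁ = dotR n₂ n₂ := by
        have h1 : norm3 n₁ ^ 2 = norm3 n₂ ^ 2 := by rw [hnorm]
        rwa [norm3_sq, norm3_sq] at h1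
      have hp : crossR n₁ n₂ ≠ 0 := indep_cross_ne hn₁ hLI
      have e1 : M = dotR n₁ n₁ + 2 * dotR n₁ n₂ + dotR n₂ n₂ := by
        rw [hMdef]; simp only [dotR_expand, Pi.add_apply]; ring
      have hMr2 : M = 2 * dotR n₁ n₁ + 2 * dotR n₁ n₂ := by rw [e1]; linarith
      have hMc : ((M : ℝ) : ℂ) = 2 * ((dotR n₁ n₁ : ℝ) : ℂ) + 2 * ((dotR n₁ n₂ : ℝ) : ℂ) := by
        exact_mod_cast hMr2
      have hM0' : 2 * ((dotR n₁ n₁ : ℝ) : ℂ) + 2 * ((dotR n₁ n₂ : ℝ) : ℂ) ≠ 0 := hMc ▸ hM0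
      have hPr : dotR (crossR n₁ n₂) (crossR n₁ n₂) = dotR n₁ n₁ ^ 2 - dotR n₁ n₂ ^ 2 := by
        rw [lagrange, ← hNr]; ring
      have hPpos : 0 < dotR (crossR n₁ n₂) (crossR n₁ n₂) := dotR_self_pos hp
      have hP0' : ((dotR n₁ n₁ : ℝ) : ℂ) ^ 2 - ((dotR n₁ n₂ : ℝ) : ℂ) ^ 2 ≠ 0 := by
        have h0 : ((dotR n₁ n₁ ^ 2 - dotR n₁ n₂ ^ 2 : ℝ) : ℂ) ≠ 0 := by
          exact_mod_cast ne_of_gt (hPr ▸ hPpos)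
        push_cast at h0; convert h0 using 2
      have hM0'' : ((dotR n₁ n₁ : ℝ) : ℂ) + ((dotR n₁ n₂ : ℝ) : ℂ) ≠ 0 :=
        fun h0 => hM0' (by linear_combination 2 * h0)
      have hbval : b = -(γ * a) := by
        rw [hb, hu₂eq, keyRot n₁ n₂ u₁ hn₁ hNr hp ho₁, dotC_smul_left, dotC_sub_left,
          dotC_smul_left, dotC_add_left, dotC_toC_toC, dotC_toC_toC, ho₁,
          show dotR n₂ n₁ = dotR n₁ n₂ from dotR_comm n₂ n₁]
        simp only [← ha]
        push_cast
        field_simp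
        ring
      rw [hu₂eq, keyRot n₁ n₂ u₁ hn₁ hNr hp ho₁]
      simp only [← ha]
      rw [hbval, toC_add, hMc]
      match_scalars <;> (push_cast; field_simp; try ring)
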